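/- Let d = (7 − √21)/14. Let x, a, b be real numbers with x ∈ [1−d, 1], a ∈ [0, d], b ∈ [0, d]. Define Ŵ₈(x,a,b) = (x−a)·max(d−a, 0)/((x−d−a)·(x−d)) + (x−a)²·(x−d−a)·max(1−x−b, 0)/((x−d−a−b)·(x−d−b)·(x−d)·(1−d−b)) + (x−a)·max(d−a, 0)/((x−d−a−b)·(x−d)). Then Ŵ₈(x,a,b) ≤ Ŵ₈(1−d,a,b). -/

import Mathlib

/-- The objective function `Ŵ₈` of program (P8). -/
noncomputable def W8hat (d x a b : ℝ) : ℝ :=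
  (x - a) * max (d - a) 0 / ((x - d - a) * (x - d))
    + (x - a) ^ 2 * (x - d - a) * max (1 - x - b) 0 /
        ((x - d - a - b) * (x - d - b) * (x - d) * (1 - d - b))
    + (x - a) * max (d - a) 0 / ((x - d - a - b) * (x - d))

set_option maxHeartbeats 1000000 in
/-- Under the constraints of program (P8) with `d = (7−√21)/14`,
the objective `Ŵ₈` does not decrease when `x` is replaced by its lower bound
`1 − d`. -/
theorem W8hat_le (d x a b : ℝ)
    (hd : d = (7 - Real.sqrt 21) / 14)
    (hx : x ∈ Set.Icc (1 - d) 1)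
    (ha : a ∈ Set.Icc 0 d) (hb : b ∈ Set.Icc 0 d) :
    W8hat d x a b ≤ W8hat d (1 - d) a b := by
  obtain ⟨hx1, hx2⟩ := hx
  obtain ⟨ha1, ha2⟩ := ha
  obtain ⟨hb1, hb2⟩ := hb
  have hs : Real.sqrt 21 ^ 2 = 21 := Real.sq_sqrt (by norm_num)
  have hs0 : (0:ℝ) ≤ Real.sqrt 21 := Real.sqrt_nonneg 21
  have hdl : (17:ℝ)/100 ≤ d := by rw [hd]; nlinarith
  have hdu : d ≤ (18:ℝ)/100 := by rw [hd]; nlinarith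
  have p1 : 0 < x - d := by linarith
  have p2 : 0 < x - d - a := by linarith
  have p3 : 0 < x - d - a - b := by linarith
  have p4 : 0 < x - d - b := by linarith
  have p5 : 0 < 1 - d - b := by linarith
  have q1 : 0 < 1 - d - d := by linarith
  have q2 : 0 < 1 - d - d - a := by linarith
  have q3 : 0 < 1 - d - d - a - b := by linarith
  have q4 : 0 < 1 - d - d - b := by linarith
  have ht : 0 ≤ x - (1 - d) := by linarith
  have hmax1 : max (d - a) 0 = d - a := max_eq_left (by linarith)
  have hmax2 : max (1 - (1 - d) - b) 0 = 1 - (1 - d) - b :=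
    max_eq_left (by linarith)
  simp only [W8hat, hmax1, hmax2]
  -- Term 1
  have hT1 : (x - a) * (d - a) / ((x - d - a) * (x - d)) ≤
      (1 - d - a) * (d - a) / ((1 - d - d - a) * (1 - d - d)) := by
    rw [div_le_div_iff₀ (by positivity) (by positivity)]
    nlinarith [mul_nonneg ht (by nlinarith : (0:ℝ) ≤ (x - a) * (1 - d - a) - d * (d - a)),
      mul_nonneg (by linarith : (0:ℝ) ≤ d - a) ht]
  -- Term 3
  have hT3 : (x - a) * (d - a) / ((x - d - a - b) * (x - d)) ≤
      (1 - d - a) * (d - a) / ((1 - d - d - a - b) * (1 - d - d)) := by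
    rw [div_le_div_iff₀ (by positivity) (by positivity)]
    nlinarith [mul_nonneg ht (by nlinarith : (0:ℝ) ≤ (x - a) * (1 - d - a) - (d + b) * (d - a)),
      mul_nonneg (by linarith : (0:ℝ) ≤ d - a) ht]
  -- Term 2
  have hT2 : (x - a) ^ 2 * (x - d - a) * max (1 - x - b) 0 /
        ((x - d - a - b) * (x - d - b) * (x - d) * (1 - d - b)) ≤
      (1 - d - a) ^ 2 * (1 - d - d - a) * (1 - (1 - d) - b) /
        ((1 - d - d - a - b) * (1 - d - d - b) * (1 - d - d) * (1 - d - b)) := by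
    rcases le_or_gt (1 - x - b) 0 with hc | hc
    · rw [max_eq_right hc]
      have h0 : (x - a) ^ 2 * (x - d - a) * 0 /
          ((x - d - a - b) * (x - d - b) * (x - d) * (1 - d - b)) = 0 := by
        rw [mul_zero, zero_div]
      rw [h0]
      have : (0:ℝ) ≤ 1 - (1 - d) - b := by linarith
      positivity
    · rw [max_eq_left hc.le]
      -- factor A : (x-a)^2 / ((x-d-b)*(x-d)) is decreasing
      have hA : (x - a) ^ 2 / ((x - d - b) * (x - d)) ≤
          (1 - d - a) ^ 2 / ((1 - d - d - b) * (1 - d - d)) := by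
        rw [div_le_div_iff₀ (by positivity) (by positivity)]
        have h1 : (x - a) * (1 - d - d - b) ≤ (1 - d - a) * (x - d - b) := by
          nlinarith [mul_nonneg ht (by linarith : (0:ℝ) ≤ d + b - a)]
        have h2 : (x - a) * (1 - d - d) ≤ (1 - d - a) * (x - d) := by
          nlinarith [mul_nonneg ht (by linarith : (0:ℝ) ≤ d - a)]
        have hxa : 0 < x - a := by linarith
        nlinarith [mul_le_mul h1 h2 (mul_nonneg (by linarith) (by linarith)) (mul_nonneg (by linarith) (by linarith))]
      -- factor G : (x-d-a)*(1-x-b)/(x-d-a-b) is decreasing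
      have hG : (x - d - a) * (1 - x - b) / (x - d - a - b) ≤
          (1 - d - d - a) * (1 - (1 - d) - b) / (1 - d - d - a - b) := by
        rw [div_le_div_iff₀ p3 q3]
        nlinarith [mul_nonneg ht (by nlinarith :
          (0:ℝ) ≤ (x - d - a) * (1 - d - d - a - b) + b * (d - b))]
      have hGnn : 0 ≤ (x - d - a) * (1 - x - b) / (x - d - a - b) := by positivity
      have hAnn : 0 ≤ (1 - d - a) ^ 2 / ((1 - d - d - b) * (1 - d - d)) := by positivity
      have hAG := mul_le_mul hA hG hGnn hAnn
      have e1 : (x - a) ^ 2 * (x - d - a) * (1 - x - b) /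
          ((x - d - a - b) * (x - d - b) * (x - d) * (1 - d - b)) =
          (x - a) ^ 2 / ((x - d - b) * (x - d)) *
            ((x - d - a) * (1 - x - b) / (x - d - a - b)) / (1 - d - b) := by
        field_simp
      have e2 : (1 - d - a) ^ 2 * (1 - d - d - a) * (1 - (1 - d) - b) /
          ((1 - d - d - a - b) * (1 - d - d - b) * (1 - d - d) * (1 - d - b)) =
          (1 - d - a) ^ 2 / ((1 - d - d - b) * (1 - d - d)) *
            ((1 - d - d - a) * (1 - (1 - d) - b) / (1 - d - d - a - b)) / (1 - d - b) := by
        field_simp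
      rw [e1, e2]
      exact div_le_div_of_nonneg_right hAG p5.le
  linarith [hT1, hT2, hT3]
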